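/- arXiv:1012.2816 — 2 statements merged into one kernel-verified Lean document; each statement's English description precedes it below -/
import Mathlib

section
/- Let n ≥ 1 and let h be a smooth complex-valued function on the open unit disk 𝔻. Then h satisfies the generalized Cauchy–Riemann equation ∂ⁿh/∂z̄ⁿ = 0 on 𝔻 if and only if there exist holomorphic functions h_0, …, h_{n−1} on 𝔻 such that h(z) = h_0(z) + h_1(z)·z̄ + ⋯ + h_{n−1}(z)·z̄^{n−1} for all z ∈ 𝔻. -/
open MeasureTheory Complex Metric

noncomputable section

/-- The open unit disk in `ℂ`. -/
def unitDisk : Set ℂ := Metric.ball (0 : ℂ) 1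

/-- The Wirtinger derivative `∂h/∂z̄ = (1/2)(∂h/∂x + i ∂h/∂y)`. -/
def wirtingerBar (h : ℂ → ℂ) (z : ℂ) : ℂ :=
  (1 / 2 : ℂ) * (fderiv ℝ h z 1 + Complex.I * fderiv ℝ h z Complex.I)

/-- `h` is `n`-analytic (polyanalytic of order `n`) on the unit disk. -/
def PolyAnalyticOn (n : ℕ) (h : ℂ → ℂ) : Prop :=
  ∃ g : Fin n → ℂ → ℂ, (∀ j, DifferentiableOn ℂ (g j) unitDisk) ∧
    ∀ z ∈ unitDisk, h z = ∑ j : Fin n, g j z * (starRingEnd ℂ z) ^ (j : ℕ)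

/- auxiliary lemmas -/

lemma wb_val {h : ℂ → ℂ} {z : ℂ} {L : ℂ →L[ℝ] ℂ} (hL : HasFDerivAt h L z) :
    wirtingerBar h z = (1 / 2 : ℂ) * (L 1 + Complex.I * L Complex.I) := by
  rw [wirtingerBar, hL.fderiv]

lemma wb_congr {f g : ℂ → ℂ} {z : ℂ} (hfg : f =ᶠ[nhds z] g) :
    wirtingerBar f z = wirtingerBar g z := by
  rw [wirtingerBar, wirtingerBar, hfg.fderiv_eq]

-- CR lemma
lemma cr {h : ℂ → ℂ} {z : ℂ} (hd : DifferentiableAt ℝ h z)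
    (hw : wirtingerBar h z = 0) : DifferentiableAt ℂ h z := by
  set L := fderiv ℝ h z with hLdef
  have hL : HasFDerivAt h L z := hd.hasFDerivAt
  have h0 : L 1 + Complex.I * L Complex.I = 0 := by
    rw [wirtingerBar] at hw
    field_simp at hw
    rw [mul_zero] at hw
    exact hw
  have hLI : L Complex.I = Complex.I * L 1 := by
    linear_combination (-Complex.I) * h0 + L Complex.I * Complex.I_sq
  set L' : ℂ →L[ℂ] ℂ := (L 1) • (ContinuousLinearMap.id ℂ ℂ) with hL'
  have hres : L'.restrictScalars ℝ = L := by
    ext w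
    have hrep : w = (w.re : ℝ) • (1 : ℂ) + (w.im : ℝ) • Complex.I := by
      rw [Complex.real_smul, Complex.real_smul, mul_one, Complex.re_add_im]
    have : L w = (w.re : ℝ) • L 1 + (w.im : ℝ) • L Complex.I := by
      conv_lhs => rw [hrep]
      rw [map_add, _root_.map_smul, _root_.map_smul]
    simp only [ContinuousLinearMap.coe_restrictScalars', hL',
      ContinuousLinearMap.smul_apply, ContinuousLinearMap.id_apply, smul_eq_mul]
    rw [this, hLI, Complex.real_smul, Complex.real_smul]
    conv_lhs => rw [← Complex.re_add_im w]
    ring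
  exact (hasFDerivAt_of_restrictScalars ℝ hL hres).differentiableAt

lemma hasFDerivAt_term {g : ℂ → ℂ} {z : ℂ} (hg : DifferentiableAt ℂ g z) (k : ℕ) :
    ∃ L : ℂ →L[ℝ] ℂ, HasFDerivAt (fun w => g w * (starRingEnd ℂ w) ^ k) L z ∧
      (1 / 2 : ℂ) * (L 1 + Complex.I * L Complex.I)
        = k * g z * (starRingEnd ℂ z) ^ (k - 1) := by
  have hc : HasFDerivAt g ((fderiv ℂ g z).restrictScalars ℝ) z :=
    hg.hasFDerivAt.restrictScalars ℝ
  have hconj : HasFDerivAt (fun w : ℂ => starRingEnd ℂ w)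
      (Complex.conjCLE : ℂ →L[ℝ] ℂ) z := by
    exact Complex.conjCLE.hasFDerivAt (x := z)
  have hpow : HasDerivAt (fun x : ℂ => x ^ k)
      ((k : ℂ) * (starRingEnd ℂ z) ^ (k - 1)) (starRingEnd ℂ z) := hasDerivAt_pow k _
  have hd := (hpow.hasFDerivAt.restrictScalars ℝ).comp z hconj
  refine ⟨_, hc.mul hd, ?_⟩
  have hfd : ∀ v : ℂ, (fderiv ℂ g z) v = v * deriv g z := by
    intro v
    calc (fderiv ℂ g z) v = (fderiv ℂ g z) (v • 1) := by rw [smul_eq_mul, mul_one]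
      _ = v • (fderiv ℂ g z 1) := map_smul _ _ _
      _ = v * deriv g z := by rw [smul_eq_mul, fderiv_apply_one_eq_deriv]
  simp only [ContinuousLinearMap.add_apply, ContinuousLinearMap.smul_apply,
    ContinuousLinearMap.coe_comp', Function.comp_apply,
    ContinuousLinearMap.coe_restrictScalars', ContinuousLinearMap.smulRight_apply,
    ContinuousLinearMap.one_apply, Complex.conjCLE_apply, hfd, smul_eq_mul,
    ContinuousLinearMap.toSpanSingleton_apply]
  have hCI : (Complex.conjCLE : ℂ →L[ℝ] ℂ) Complex.I = -Complex.I := by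
    simp [Complex.conj_I]
  have hC1 : (Complex.conjCLE : ℂ →L[ℝ] ℂ) 1 = 1 := by simp
  rw [hCI, hC1]
  ring_nf
  rw [Complex.I_sq]
  ring

lemma wb_sum {n : ℕ} {g : Fin n → ℂ → ℂ} {k : Fin n → ℕ} {z : ℂ}
    (hg : ∀ j, DifferentiableAt ℂ (g j) z) :
    (DifferentiableAt ℝ (fun w => ∑ j : Fin n, g j w * (starRingEnd ℂ w) ^ (k j)) z) ∧
    wirtingerBar (fun w => ∑ j : Fin n, g j w * (starRingEnd ℂ w) ^ (k j)) z
      = ∑ j : Fin n, (k j : ℂ) * g j z * (starRingEnd ℂ z) ^ (k j - 1) := by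
  choose L hL hval using fun j => hasFDerivAt_term (hg j) (k j)
  have hsum : HasFDerivAt (fun w => ∑ j : Fin n, g j w * (starRingEnd ℂ w) ^ (k j))
      (∑ j : Fin n, L j) z := HasFDerivAt.fun_sum fun j _ => hL j
  refine ⟨hsum.differentiableAt, ?_⟩
  rw [wb_val hsum]
  simp only [ContinuousLinearMap.sum_apply]
  rw [Finset.mul_sum, ← Finset.sum_add_distrib, Finset.mul_sum]
  exact Finset.sum_congr rfl fun j _ => hval j

lemma wb_sub {f g : ℂ → ℂ} {z : ℂ} (hf : DifferentiableAt ℝ f z)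
    (hg : DifferentiableAt ℝ g z) :
    wirtingerBar (fun w => f w - g w) z = wirtingerBar f z - wirtingerBar g z := by
  rw [wb_val (hf.hasFDerivAt.fun_sub hg.hasFDerivAt), wb_val hf.hasFDerivAt, wb_val hg.hasFDerivAt]
  simp only [ContinuousLinearMap.sub_apply]
  ring

lemma diffAt_of_diffOn {g : ℂ → ℂ} (hg : DifferentiableOn ℂ g unitDisk) {z : ℂ}
    (hz : z ∈ unitDisk) : DifferentiableAt ℂ g z :=
  (hg z hz).differentiableAt (Metric.isOpen_ball.mem_nhds hz)

lemma poly_step {n : ℕ} {h : ℂ → ℂ} (hp : PolyAnalyticOn (n + 1) h) :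
    PolyAnalyticOn n (wirtingerBar h) := by
  obtain ⟨g, hgd, hrep⟩ := hp
  refine ⟨fun j => fun w => (((j : ℕ) : ℂ) + 1) * g j.succ w,
    fun j => (differentiableOn_const _).mul (hgd j.succ), fun z hz => ?_⟩
  have hcongr : wirtingerBar h z
      = wirtingerBar (fun w => ∑ j : Fin (n + 1), g j w * (starRingEnd ℂ w) ^ (j : ℕ)) z := by
    apply wb_congr
    exact Filter.eventuallyEq_of_mem (Metric.isOpen_ball.mem_nhds hz) hrep
  rw [hcongr, (wb_sum (fun j => diffAt_of_diffOn (hgd j) hz)).2, Fin.sum_univ_succ]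
  simp only [Fin.val_zero, Nat.cast_zero, zero_mul, zero_add, Fin.val_succ, Nat.cast_add,
    Nat.cast_one, Nat.add_sub_cancel]

lemma poly_zero {n : ℕ} : ∀ (h : ℂ → ℂ), PolyAnalyticOn n h →
    ∀ z ∈ unitDisk, (wirtingerBar^[n] h) z = 0 := by
  induction n with
  | zero =>
    intro h hp z hz
    obtain ⟨g, _, hrep⟩ := hp
    simpa using hrep z hz
  | succ n ih =>
    intro h hp z hz
    rw [Function.iterate_succ_apply]
    exact ih _ (poly_step hp) z hz

lemma wb_smooth {h : ℂ → ℂ} (hsm : ContDiffOn ℝ (⊤ : ℕ∞) h unitDisk) :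
    ContDiffOn ℝ (⊤ : ℕ∞) (wirtingerBar h) unitDisk := by
  have hu : UniqueDiffOn ℝ unitDisk := Metric.isOpen_ball.uniqueDiffOn
  have hderiv : ContDiffOn ℝ (⊤ : ℕ∞) (fun z => fderivWithin ℝ h unitDisk z) unitDisk :=
    hsm.fderivWithin hu (by simp)
  have h1 : ContDiffOn ℝ (⊤ : ℕ∞) (fun z => fderivWithin ℝ h unitDisk z 1) unitDisk :=
    hderiv.clm_apply contDiffOn_const
  have hI : ContDiffOn ℝ (⊤ : ℕ∞) (fun z => fderivWithin ℝ h unitDisk z Complex.I) unitDisk :=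
    hderiv.clm_apply contDiffOn_const
  have hmain : ContDiffOn ℝ (⊤ : ℕ∞) (fun z => (1 / 2 : ℂ) *
      (fderivWithin ℝ h unitDisk z 1 + Complex.I * fderivWithin ℝ h unitDisk z Complex.I))
      unitDisk := contDiffOn_const.mul (h1.add (contDiffOn_const.mul hI))
  exact hmain.congr fun z hz => by
    have ho : IsOpen unitDisk := Metric.isOpen_ball
    rw [wirtingerBar, fderivWithin_of_isOpen ho hz]

lemma zero_poly : ∀ (n : ℕ) (h : ℂ → ℂ), ContDiffOn ℝ (⊤ : ℕ∞) h unitDisk →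
    (∀ z ∈ unitDisk, (wirtingerBar^[n] h) z = 0) → PolyAnalyticOn n h := by
  intro n
  induction n with
  | zero =>
    intro h _ h0
    exact ⟨fun j => j.elim0, fun j => j.elim0, fun z hz => by simpa using h0 z hz⟩
  | succ n ih =>
    intro h hsm h0
    have hfsm := wb_smooth hsm
    have hf0 : ∀ z ∈ unitDisk, (wirtingerBar^[n] (wirtingerBar h)) z = 0 := fun z hz => by
      rw [← Function.iterate_succ_apply]; exact h0 z hz
    obtain ⟨g, hgd, hrep⟩ := ih (wirtingerBar h) hfsm hf0
    set H : ℂ → ℂ := fun w =>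
      ∑ j : Fin n, ((((j : ℕ) : ℂ) + 1)⁻¹ * g j w) * (starRingEnd ℂ w) ^ ((j : ℕ) + 1) with hH
    have hHd : ∀ z ∈ unitDisk, DifferentiableAt ℝ H z ∧ wirtingerBar H z = wirtingerBar h z := by
      intro z hz
      have hdiff : ∀ j : Fin n, DifferentiableAt ℂ (fun w => (((j : ℕ) : ℂ) + 1)⁻¹ * g j w) z :=
        fun j => (differentiableAt_const _).mul (diffAt_of_diffOn (hgd j) hz)
      obtain ⟨hd, hv⟩ := wb_sum (g := fun j => fun w => (((j : ℕ) : ℂ) + 1)⁻¹ * g j w)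
        (k := fun j => (j : ℕ) + 1) hdiff
      refine ⟨hd, ?_⟩
      rw [hv, hrep z hz]
      refine Finset.sum_congr rfl fun j _ => ?_
      have hne : (((j : ℕ) : ℂ) + 1) ≠ 0 := Nat.cast_add_one_ne_zero _
      rw [Nat.add_sub_cancel]
      push_cast
      field_simp
    set g0 : ℂ → ℂ := fun w => h w - H w with hg0
    have hg0d : DifferentiableOn ℂ g0 unitDisk := by
      intro z hz
      have hhd : DifferentiableAt ℝ h z :=
        ((hsm.differentiableOn (by simp)) z hz).differentiableAt (Metric.isOpen_ball.mem_nhds hz)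
      have hHd' := (hHd z hz).1
      have hw0 : wirtingerBar g0 z = 0 := by
        rw [hg0, wb_sub hhd hHd', (hHd z hz).2, sub_self]
      exact (cr (hhd.sub hHd') hw0).differentiableWithinAt
    refine ⟨Fin.cases g0 (fun j => fun w => (((j : ℕ) : ℂ) + 1)⁻¹ * g j w), ?_, ?_⟩
    · intro j
      refine Fin.cases ?_ ?_ j
      · exact hg0d
      · intro i
        exact (differentiableOn_const _).mul (hgd i)
    · intro z hz
      rw [Fin.sum_univ_succ]
      simp only [Fin.cases_zero, Fin.cases_succ, pow_zero, mul_one, Fin.val_succ, Fin.val_zero]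
      have hsum : ∑ j : Fin n,
          ((((j : ℕ) : ℂ) + 1)⁻¹ * g j z) * (starRingEnd ℂ z) ^ ((j : ℕ) + 1) = H z := rfl
      rw [← hsum] at *
      show h z = (h z - H z) + _
      rw [hsum]
      ring


/-- a smooth function on the unit disk satisfies `∂ⁿh/∂z̄ⁿ = 0` there
if and only if it is `n`-analytic. -/
theorem polyanalytic_iff_iterated_wirtingerBar_eq_zero
    (n : ℕ) (hn : 1 ≤ n) (h : ℂ → ℂ) (hsm : ContDiffOn ℝ (⊤ : ℕ∞) h unitDisk) :
    (∀ z ∈ unitDisk, (wirtingerBar^[n] h) z = 0) ↔ PolyAnalyticOn n h :=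
  ⟨fun h0 => zero_poly n h hsm h0, fun hp => poly_zero h hp⟩

end
end

section
/- Let n ≥ 1. For every ε > 0 there exists δ > 0 such that for all z, w ∈ 𝔻 with |φ_z(w)| < δ, one has |(1 − |w|²)·|k_z(w)| − n| < ε. In particular there is a number 0 < r < 1 such that (1 − |w|²)·|k_z(w)| > n/2 whenever |φ_z(w)| < r. -/
open MeasureTheory Complex Metric
open scoped ENNReal NNReal

noncomputable section

/-- The reproducing kernel `K_z(w)` of the `n`-analytic Bergman space `A²_n`. -/
def bergKernel (n : ℕ) (z w : ℂ) : ℂ :=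
  ((n : ℂ) / (1 - w * (starRingEnd ℂ z)) ^ (2 * n)) *
    ∑ j ∈ Finset.range n,
      (-1 : ℂ) ^ j * (n.choose (j + 1) : ℂ) * ((n + j).choose n : ℂ) *
        ((‖1 - w * (starRingEnd ℂ z)‖ : ℝ) : ℂ) ^ (2 * (n - 1 - j)) *
        ((‖w - z‖ : ℝ) : ℂ) ^ (2 * j)

/-- The normalized reproducing kernel `k_z = ((1 − |z|²)/n)·K_z` of `A²_n`. -/
def normKernel (n : ℕ) (z w : ℂ) : ℂ :=
  (((1 - ‖z‖ ^ 2) / n : ℝ) : ℂ) * bergKernel n z w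

noncomputable def Pfun (n : ℕ) (t : ℝ) : ℝ :=
  ∑ j ∈ Finset.range n, (-1:ℝ)^j * (n.choose (j+1)) * ((n+j).choose n) * t^(2*j)

lemma Pfun_zero (n : ℕ) (hn : 1 ≤ n) : Pfun n 0 = n := by
  unfold Pfun
  rw [Finset.sum_eq_single 0]
  · simp
  · intro j _ hne
    simp [zero_pow (show 2*j ≠ 0 by omega)]
  · intro h; exact absurd (Finset.mem_range.mpr (by omega)) h

lemma Pfun_cont (n : ℕ) : Continuous (Pfun n) := by
  unfold Pfun
  apply continuous_finset_sum
  intro j _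
  fun_prop

lemma abs_identity (z w : ℂ) :
    ‖1 - w * (starRingEnd ℂ z)‖ ^ 2 - ‖z - w‖ ^ 2
      = (1 - ‖z‖ ^ 2) * (1 - ‖w‖ ^ 2) := by
  simp only [Complex.sq_norm, Complex.normSq_apply, Complex.sub_re, Complex.sub_im,
    Complex.mul_re, Complex.mul_im, Complex.one_re, Complex.one_im,
    Complex.conj_re, Complex.conj_im]
  ring

lemma key (n : ℕ) (hn : 1 ≤ n) (z w : ℂ) (hz : ‖z‖ < 1)
    (hw : ‖w‖ < 1) :
    (1 - ‖w‖ ^ 2) * ‖normKernel n z w‖ =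
      (1 - (‖(z - w) / (1 - w * (starRingEnd ℂ z))‖) ^ 2) *
        |Pfun n (‖(z - w) / (1 - w * (starRingEnd ℂ z))‖)| := by
  set u : ℂ := 1 - w * (starRingEnd ℂ z) with hu_def
  have hu : u ≠ 0 := by
    have h1 : ‖w * (starRingEnd ℂ z)‖ < 1 := by
      rw [norm_mul, Complex.norm_conj]
      nlinarith [norm_nonneg w, norm_nonneg z]
    intro h
    have : w * (starRingEnd ℂ z) = 1 := by
      have := sub_eq_zero.mp h; linear_combination -this
    rw [this] at h1; simp at h1
  set a : ℝ := ‖u‖ with ha_def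
  set b : ℝ := ‖z - w‖ with hb_def
  have ha : 0 < a := norm_pos_iff.mpr hu
  set ρ : ℝ := ‖(z - w) / u‖ with hρ_def
  have hρ : ρ = b / a := by rw [hρ_def, norm_div]
  have hb : b = ρ * a := by rw [hρ]; field_simp
  have hwz : ‖w - z‖ = b := norm_sub_rev w z
  have hsum : (∑ j ∈ Finset.range n,
      (-1 : ℂ) ^ j * (n.choose (j + 1) : ℂ) * ((n + j).choose n : ℂ) *
        ((a : ℝ) : ℂ) ^ (2 * (n - 1 - j)) * ((b : ℝ) : ℂ) ^ (2 * j))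
      = ((a ^ (2 * (n - 1)) * Pfun n ρ : ℝ) : ℂ) := by
    rw [Pfun, Finset.mul_sum]
    push_cast
    apply Finset.sum_congr rfl
    intro j hj
    have hj' : j < n := Finset.mem_range.mp hj
    rw [hb]
    push_cast
    rw [mul_pow, show 2 * (n - 1) = 2 * (n - 1 - j) + 2 * j by omega, pow_add]
    ring
  have habs : ‖normKernel n z w‖
      = (1 - ‖z‖ ^ 2) / n * ((n : ℝ) / a ^ (2 * n) * (a ^ (2 * (n - 1)) * |Pfun n ρ|)) := by
    have h1 : ‖z‖ ^ 2 < 1 := by nlinarith [norm_nonneg z]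
    rw [normKernel, bergKernel, ← hu_def, hwz, hsum]
    simp only [norm_mul, norm_div, norm_pow, Complex.norm_real, Real.norm_eq_abs, Complex.norm_natCast]
    rw [abs_of_pos ha, _root_.abs_of_nonneg (by linarith : (0:ℝ) ≤ 1 - ‖z‖ ^ 2), Nat.abs_cast]
  have hid : (1 - ‖z‖ ^ 2) * (1 - ‖w‖ ^ 2) = a ^ 2 * (1 - ρ ^ 2) := by
    rw [← abs_identity z w, ← ha_def, ← hb_def, hb]; ring
  have hn0 : (n : ℝ) ≠ 0 := by positivity
  have h2n : a ^ (2 * n) = a ^ (2 * (n - 1)) * a ^ 2 := by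
    rw [← pow_add]; congr 1; omega
  rw [habs, h2n]
  field_simp
  linear_combination |Pfun n ρ| * hid

/-- `(1 − |w|²)|k_z(w)| → n` uniformly as the pseudo-hyperbolic distance
`|φ_z(w)| → 0`; in particular `(1 − |w|²)|k_z(w)| > n/2` whenever `|φ_z(w)| < r`
for some `0 < r < 1`. -/
theorem normKernel_near_diagonal (n : ℕ) (hn : 1 ≤ n) :
    (∀ ε : ℝ, 0 < ε → ∃ δ : ℝ, 0 < δ ∧ ∀ z ∈ unitDisk, ∀ w ∈ unitDisk,
      ‖(z - w) / (1 - w * (starRingEnd ℂ z))‖ < δ →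
        |(1 - ‖w‖ ^ 2) * ‖normKernel n z w‖ - n| < ε) ∧
    (∃ r : ℝ, 0 < r ∧ r < 1 ∧ ∀ z ∈ unitDisk, ∀ w ∈ unitDisk,
      ‖(z - w) / (1 - w * (starRingEnd ℂ z))‖ < r →
        (n : ℝ) / 2 < (1 - ‖w‖ ^ 2) * ‖normKernel n z w‖) := by
  have hGc : Continuous fun t : ℝ => (1 - t ^ 2) * |Pfun n t| :=
    (continuous_const.sub (continuous_pow 2)).mul (Pfun_cont n).abs
  have hG0 : (1 - (0:ℝ) ^ 2) * |Pfun n 0| = n := by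
    rw [Pfun_zero n hn]
    simp [abs_of_nonneg (Nat.cast_nonneg (α := ℝ) n)]
  have main : ∀ ε : ℝ, 0 < ε → ∃ δ : ℝ, 0 < δ ∧ ∀ z ∈ unitDisk, ∀ w ∈ unitDisk,
      ‖(z - w) / (1 - w * (starRingEnd ℂ z))‖ < δ →
        |(1 - ‖w‖ ^ 2) * ‖normKernel n z w‖ - n| < ε := by
    intro ε hε
    obtain ⟨δ, hδ, hδ'⟩ := Metric.continuousAt_iff.mp (hGc.continuousAt (x := 0)) ε hε
    refine ⟨δ, hδ, ?_⟩
    intro z hz w hw hρ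
    have hz' : ‖z‖ < 1 := by
      simpa [unitDisk] using mem_ball_zero_iff.mp hz
    have hw' : ‖w‖ < 1 := by
      simpa [unitDisk] using mem_ball_zero_iff.mp hw
    rw [key n hn z w hz' hw']
    set ρ := ‖(z - w) / (1 - w * (starRingEnd ℂ z))‖ with hρdef
    have hd : dist ρ 0 < δ := by
      rw [Real.dist_eq, sub_zero, _root_.abs_of_nonneg (norm_nonneg _)]
      exact hρ
    have := hδ' hd
    rw [Real.dist_eq, hG0] at this
    exact this
  refine ⟨main, ?_⟩
  have hn2 : (0:ℝ) < (n : ℝ) / 2 := by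
    have : (1:ℝ) ≤ n := by exact_mod_cast hn
    linarith
  obtain ⟨δ, hδ, hδ'⟩ := main ((n : ℝ) / 2) hn2
  refine ⟨min δ (1/2), lt_min hδ (by norm_num), lt_of_le_of_lt (min_le_right _ _) (by norm_num), ?_⟩
  intro z hz w hw hρ
  have h := hδ' z hz w hw (lt_of_lt_of_le hρ (min_le_left _ _))
  have := abs_lt.mp h
  linarith [this.1]

end
end
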